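/- Let n ≥ 2 and let v_i be the Jaconian vertex of the finite Jaco graph J_n(1), so that the arcs of J_{n+1}(1) that are not arcs of J_n(1) are exactly the arcs (v_j, v_{n+1}) for i+1 ≤ j ≤ n (i.e. the in-neighbourhood of v_{n+1} in J_{n+1}(1) is {v_{i+1}, …, v_n}). Then the grog numbers of the Jaco graphs satisfy g(J_{n+1}(1)) = g(J_n(1)) + (2i − n) + 1. -/

import Mathlib

/-- In-degree of vertex `v_i` in the infinite Jaco graph `J_∞(1)`, defined by strong
recursion: `d⁻(v_i)` is the number of `k < i` with an arc `(v_k, v_i)`, where for `k < i`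
the arc `(v_k, v_i)` is present iff `2k - d⁻(v_k) ≥ i` (and `k ≥ 1`). -/
noncomputable def jacoInDeg (n : ℕ) : ℕ :=
  Nat.strongRecOn n (fun n ih =>
    ((Finset.range n).attach.filter
      (fun k => 1 ≤ k.1 ∧ n ≤ 2 * k.1 - ih k.1 (Finset.mem_range.mp k.2))).card)

/-- The arc `(v_i, v_j)` of the infinite Jaco graph `J_∞(1)` (vertices indexed from 1):
present iff `i < j` and `2i - d⁻(v_i) ≥ j`. -/
def jacoArc (i j : ℕ) : Prop :=
  1 ≤ i ∧ i < j ∧ j ≤ 2 * i - jacoInDeg i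

noncomputable instance (i j : ℕ) : Decidable (jacoArc i j) := by unfold jacoArc; infer_instance

/-- Out-degree of `v_i` in the finite Jaco graph `J_n(1)` (vertex set `{v_1, …, v_n}`). -/
noncomputable  def jacoOutDeg (n i : ℕ) : ℕ :=
  ((Finset.Icc 1 n).filter (fun j => jacoArc i j)).card

/-- In-degree of `v_i` in the finite Jaco graph `J_n(1)`. -/
noncomputable def jacoInDegFin (n i : ℕ) : ℕ :=
  ((Finset.Icc 1 n).filter (fun k => jacoArc k i)).card

/-- Adjacency in the competition graph `C(J_n(1))`: distinct vertices `v_a, v_b` of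
`J_n(1)` are adjacent iff some vertex `v_w` of `J_n(1)` is a common out-neighbour. -/
def jacoCompAdj (n a b : ℕ) : Prop :=
  a ≠ b ∧ a ∈ Finset.Icc 1 n ∧ b ∈ Finset.Icc 1 n ∧
    ∃ w ∈ Finset.Icc 1 n, jacoArc a w ∧ jacoArc b w


/-- The arc set of the finite Jaco graph `J_n(1)` as a finite set of pairs. -/
noncomputable def jacoArcs (n : ℕ) : Finset (ℕ × ℕ) :=
  (Finset.Icc 1 n ×ˢ Finset.Icc 1 n).filter (fun a => jacoArc a.1 a.2)

/-- A state of the Grog algorithm: a finite set of remaining arcs (on vertices `v_1, v_2, …`,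
identified with positive naturals) together with the current population of every vertex. -/
structure PPState where
  arcs : Finset (ℕ × ℕ)
  pop : ℕ → ℕ

/-- One predation step along the arc `a = (u, w)`: the arc is deleted and the populations
of `u` and `w` each decrease by `1`. -/
def predStep (s : PPState) (a : ℕ × ℕ) : PPState :=
  ⟨s.arcs.erase a, fun v => if v = a.1 ∨ v = a.2 then s.pop v - 1 else s.pop v⟩

/-- The arc `a` may be predated along in state `s`: it is a current arc and both of its
endpoints have current population at least `1`. -/
def validArc (s : PPState) (a : ℕ × ℕ) : Prop :=
  a ∈ s.arcs ∧ 1 ≤ s.pop a.1 ∧ 1 ≤ s.pop a.2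

/-- Run a sequence of predation steps from a state. -/
def runSeq : PPState → List (ℕ × ℕ) → PPState
  | s, [] => s
  | s, a :: l => runSeq (predStep s a) l

/-- The sequence of predation steps is valid from state `s`. -/
def ValidSeq : PPState → List (ℕ × ℕ) → Prop
  | _, [] => True
  | s, a :: l => validArc s a ∧ ValidSeq (predStep s a) l

/-- No further predation step is possible. -/
def Terminal (s : PPState) : Prop := ∀ a ∈ s.arcs, ¬ validArc s a

/-- A predator-prey strategy from state `s`: a maximal valid sequence of predation steps. -/
def IsStrategy (s : PPState) (l : List (ℕ × ℕ)) : Prop :=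
  ValidSeq s l ∧ Terminal (runSeq s l)

/-- The initial state of the digraph with arc set `A`, with initial populations `ρ(v_i) = i`. -/
def initState (A : Finset (ℕ × ℕ)) : PPState := ⟨A, id⟩

/-- The (residual) population of a state, summed over the vertices `v_1, …, v_n`. -/
def resid (n : ℕ) (s : PPState) : ℕ := ∑ v ∈ Finset.Icc 1 n, s.pop v

/-- The grog number of the digraph on `v_1, …, v_n` with arc set `A`: the minimum of the
residual population over all predator-prey strategies. -/
noncomputable def grogD (n : ℕ) (A : Finset (ℕ × ℕ)) : ℕ :=
  sInf {r | ∃ l, IsStrategy (initState A) l ∧ resid n (runSeq (initState A) l) = r}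

/-- `A` is an orientation of the labelled graph obtained from the simple graph `G` via the
bijective labelling `f` of its vertices by `v_1, …, v_n`. -/
def LabelledOrientation {V : Type*} (G : SimpleGraph V) (n : ℕ) (f : V → ℕ)
    (A : Finset (ℕ × ℕ)) : Prop :=
  Function.Injective f ∧ Set.range f = ↑(Finset.Icc 1 n) ∧
  (∀ u v, G.Adj u v ↔ ((f u, f v) ∈ A ∨ (f v, f u) ∈ A)) ∧
  (∀ u v, ¬(((f u, f v) ∈ A) ∧ ((f v, f u) ∈ A))) ∧
  (∀ a ∈ A, ∃ u v, G.Adj u v ∧ a = (f u, f v))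

/-- `A` is an orientation of the path `P_n` whose vertices, in path order, are labelled
`p 0, p 1, …, p (n-1)`, where `p` is a bijection onto `{1, …, n}`. -/
def PathOrientation (n : ℕ) (p : ℕ → ℕ) (A : Finset (ℕ × ℕ)) : Prop :=
  Set.BijOn p (Set.Iio n) (Set.Icc 1 n) ∧
  (∀ i, i + 1 < n →
    (((p i, p (i+1)) ∈ A ∨ (p (i+1), p i) ∈ A) ∧
      ¬(((p i, p (i+1)) ∈ A) ∧ ((p (i+1), p i) ∈ A)))) ∧
  (∀ a ∈ A, ∃ i, i + 1 < n ∧ (a = (p i, p (i+1)) ∨ a = (p (i+1), p i)))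

/-- `A` is an orientation of the cycle `C_n` whose vertices, in cyclic order, are labelled
`p 0, p 1, …, p (n-1)`, where `p` is a bijection onto `{1, …, n}`. -/
def CycleOrientation (n : ℕ) (p : ℕ → ℕ) (A : Finset (ℕ × ℕ)) : Prop :=
  Set.BijOn p (Set.Iio n) (Set.Icc 1 n) ∧
  (∀ i < n,
    (((p i, p ((i+1) % n)) ∈ A ∨ (p ((i+1) % n), p i) ∈ A) ∧
      ¬(((p i, p ((i+1) % n)) ∈ A) ∧ ((p ((i+1) % n), p i) ∈ A)))) ∧
  (∀ a ∈ A, ∃ i < n, a = (p i, p ((i+1) % n)) ∨ a = (p ((i+1) % n), p i))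

/-- The grog number of the finite Jaco graph `J_n(1)`. -/
noncomputable def grogJaco (n : ℕ) : ℕ := grogD n (jacoArcs n)

/-! ### Auxiliary lemmas -/

lemma jacoInDeg_eq (m : ℕ) :
    jacoInDeg m = ((Finset.range m).filter (fun k => 1 ≤ k ∧ m ≤ 2 * k - jacoInDeg k)).card := by
  have h1 : jacoInDeg m = ((Finset.range m).attach.filter
      (fun k => 1 ≤ k.1 ∧ m ≤ 2 * k.1 - jacoInDeg k.1)).card := by
    rw [jacoInDeg, Nat.strongRecOn, WellFounded.fix_eq]
    rfl
  rw [h1]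
  exact Finset.card_bij (fun k _ => k.1)
    (by intro a ha; simp only [Finset.mem_filter] at ha ⊢; exact ⟨a.2, ha.2⟩)
    (by intro a _ b _ h; exact Subtype.ext h)
    (by intro b hb; simp only [Finset.mem_filter] at hb
        exact ⟨⟨b, hb.1⟩, by simp [Finset.mem_filter, hb.2], rfl⟩)

lemma jacoInDeg_le (m : ℕ) : jacoInDeg m ≤ m := by
  rw [jacoInDeg_eq]
  calc _ ≤ (Finset.range m).card := Finset.card_filter_le _ _
  _ = m := Finset.card_range m

/-- The degree of vertex `v` in arc set `A`. -/
def degA (A : Finset (ℕ × ℕ)) (v : ℕ) : ℕ :=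
  (A.filter (fun a => a.1 = v ∨ a.2 = v)).card

lemma jacoArcs_mem {m : ℕ} {a : ℕ × ℕ} (h : a ∈ jacoArcs m) :
    a.1 ≠ a.2 ∧ a.1 ∈ Finset.Icc 1 m ∧ a.2 ∈ Finset.Icc 1 m := by
  rw [jacoArcs, Finset.mem_filter, Finset.mem_product] at h
  exact ⟨Nat.ne_of_lt h.2.2.1, h.1.1, h.1.2⟩

lemma degA_jaco_le (m v : ℕ) : degA (jacoArcs m) v ≤ v := by
  classical
  have hsub : (jacoArcs m).filter (fun a => a.1 = v ∨ a.2 = v) ⊆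
      (jacoArcs m).filter (fun a => a.1 = v) ∪ (jacoArcs m).filter (fun a => a.2 = v) := by
    intro a ha
    rw [Finset.mem_filter] at ha
    rcases ha.2 with h | h
    · exact Finset.mem_union_left _ (Finset.mem_filter.mpr ⟨ha.1, h⟩)
    · exact Finset.mem_union_right _ (Finset.mem_filter.mpr ⟨ha.1, h⟩)
  have hout : ((jacoArcs m).filter (fun a => a.1 = v)).card ≤
      (Finset.Ioc v (2 * v - jacoInDeg v)).card := by
    apply Finset.card_le_card_of_injOn (fun a => a.2)
    · intro a ha
      rw [Finset.mem_coe, Finset.mem_filter, jacoArcs, Finset.mem_filter] at ha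
      obtain ⟨⟨_, harc⟩, h1⟩ := ha
      rw [jacoArc] at harc
      rw [Finset.mem_coe, Finset.mem_Ioc]
      exact ⟨h1 ▸ harc.2.1, h1 ▸ harc.2.2⟩
    · intro a ha b hb hab
      rw [Finset.mem_coe, Finset.mem_filter] at ha hb
      exact Prod.ext (ha.2.trans hb.2.symm) hab
  have hin : ((jacoArcs m).filter (fun a => a.2 = v)).card ≤ jacoInDeg v := by
    rw [jacoInDeg_eq]
    apply Finset.card_le_card_of_injOn (fun a => a.1)
    · intro a ha
      rw [Finset.mem_coe, Finset.mem_filter, jacoArcs, Finset.mem_filter] at ha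
      obtain ⟨⟨_, harc⟩, h2⟩ := ha
      rw [jacoArc] at harc
      rw [Finset.mem_coe, Finset.mem_filter, Finset.mem_range]
      exact ⟨h2 ▸ harc.2.1, harc.1, h2 ▸ harc.2.2⟩
    · intro a ha b hb hab
      rw [Finset.mem_coe, Finset.mem_filter] at ha hb
      exact Prod.ext hab (ha.2.trans hb.2.symm)
  have hIoc : (Finset.Ioc v (2 * v - jacoInDeg v)).card = 2 * v - jacoInDeg v - v :=
    Nat.card_Ioc _ _
  have hd := jacoInDeg_le v
  calc degA (jacoArcs m) v ≤ _ := Finset.card_le_card hsub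
    _ ≤ _ := Finset.card_union_le _ _
    _ ≤ (2 * v - jacoInDeg v - v) + jacoInDeg v := by
        rw [← hIoc]; exact Nat.add_le_add hout hin
    _ ≤ v := by omega
lemma resid_predStep {n : ℕ} {s : PPState} {a : ℕ × ℕ} (h12 : a.1 ≠ a.2)
    (h1 : a.1 ∈ Finset.Icc 1 n) (h2 : a.2 ∈ Finset.Icc 1 n)
    (hp1 : 1 ≤ s.pop a.1) (hp2 : 1 ≤ s.pop a.2) :
    resid n (predStep s a) + 2 = resid n s := by
  classical
  have key : ∀ v ∈ Finset.Icc 1 n,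
      (predStep s a).pop v + (if v = a.1 ∨ v = a.2 then 1 else 0) = s.pop v := by
    intro v _
    by_cases h : v = a.1 ∨ v = a.2
    · have hp : 1 ≤ s.pop v := by rcases h with h | h <;> (subst h; assumption)
      simp only [predStep, h, if_true]
      omega
    · simp only [predStep, h, if_false]; omega
  have hsum : resid n (predStep s a) +
      ∑ v ∈ Finset.Icc 1 n, (if v = a.1 ∨ v = a.2 then 1 else 0) = resid n s := by
    rw [resid, resid, ← Finset.sum_add_distrib]
    exact Finset.sum_congr rfl key
  have hfilt : (Finset.Icc 1 n).filter (fun v => v = a.1 ∨ v = a.2) = {a.1, a.2} := by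
    ext v
    simp only [Finset.mem_filter, Finset.mem_insert, Finset.mem_singleton]
    constructor
    · exact fun h => h.2
    · rintro (h | h) <;> subst h <;> exact ⟨by assumption, by tauto⟩
  have hcard : ∑ v ∈ Finset.Icc 1 n, (if v = a.1 ∨ v = a.2 then 1 else 0) = 2 := by
    rw [← Finset.card_filter, hfilt]
    rw [Finset.card_insert_of_notMem (by simpa using h12), Finset.card_singleton]
  rw [hcard] at hsum
  exact hsum

lemma resid_runSeq {n : ℕ} : ∀ (l : List (ℕ × ℕ)) (s : PPState), ValidSeq s l →
    (∀ a ∈ s.arcs, a.1 ≠ a.2 ∧ a.1 ∈ Finset.Icc 1 n ∧ a.2 ∈ Finset.Icc 1 n) →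
    resid n (runSeq s l) + 2 * l.length = resid n s := by
  intro l
  induction l with
  | nil => intro s _ _; simp [runSeq]
  | cons a l ih =>
    intro s hv hA
    obtain ⟨⟨ha, hp1, hp2⟩, hv'⟩ := hv
    obtain ⟨h12, h1, h2⟩ := hA a ha
    have hA' : ∀ b ∈ (predStep s a).arcs,
        b.1 ≠ b.2 ∧ b.1 ∈ Finset.Icc 1 n ∧ b.2 ∈ Finset.Icc 1 n := by
      intro b hb
      exact hA b (Finset.mem_of_mem_erase hb)
    have hstep := resid_predStep (n := n) h12 h1 h2 hp1 hp2
    have := ih (predStep s a) hv' hA'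
    show resid n (runSeq (predStep s a) l) + 2 * (l.length + 1) = resid n s
    omega

lemma length_le_card : ∀ (l : List (ℕ × ℕ)) (s : PPState), ValidSeq s l →
    l.length ≤ s.arcs.card := by
  intro l
  induction l with
  | nil => intro s _; simp
  | cons a l ih =>
    intro s hv
    obtain ⟨⟨ha, _, _⟩, hv'⟩ := hv
    have h1 := ih (predStep s a) hv'
    have h2 : (predStep s a).arcs.card = s.arcs.card - 1 := Finset.card_erase_of_mem ha
    have h3 : 1 ≤ s.arcs.card := Finset.card_pos.mpr ⟨a, ha⟩
    simp only [List.length_cons]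
    omega

lemma exists_full_strategy : ∀ (N : ℕ) (s : PPState), s.arcs.card = N →
    (∀ v, degA s.arcs v ≤ s.pop v) →
    ∃ l, ValidSeq s l ∧ (runSeq s l).arcs = ∅ ∧ l.length = N := by
  intro N
  induction N with
  | zero =>
    intro s hc _
    exact ⟨[], trivial, Finset.card_eq_zero.mp hc, rfl⟩
  | succ N ih =>
    intro s hc hdeg
    obtain ⟨a, ha⟩ := Finset.card_pos.mp (by rw [hc]; exact N.succ_pos)
    have hmem : a ∈ s.arcs.filter (fun b => b.1 = a.1 ∨ b.2 = a.1) :=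
      Finset.mem_filter.mpr ⟨ha, Or.inl rfl⟩
    have hd1 : 1 ≤ degA s.arcs a.1 := Finset.card_pos.mpr ⟨a, hmem⟩
    have hmem2 : a ∈ s.arcs.filter (fun b => b.1 = a.2 ∨ b.2 = a.2) :=
      Finset.mem_filter.mpr ⟨ha, Or.inr rfl⟩
    have hd2 : 1 ≤ degA s.arcs a.2 := Finset.card_pos.mpr ⟨a, hmem2⟩
    have hp1 : 1 ≤ s.pop a.1 := le_trans hd1 (hdeg a.1)
    have hp2 : 1 ≤ s.pop a.2 := le_trans hd2 (hdeg a.2)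
    have hdeg' : ∀ v, degA (predStep s a).arcs v ≤ (predStep s a).pop v := by
      intro v
      have herase : degA (predStep s a).arcs v =
          ((s.arcs.filter (fun b => b.1 = v ∨ b.2 = v)).erase a).card := by
        show ((s.arcs.erase a).filter _).card = _
        rw [Finset.filter_erase]
      by_cases hva : a.1 = v ∨ a.2 = v
      · have hain : a ∈ s.arcs.filter (fun b => b.1 = v ∨ b.2 = v) :=
          Finset.mem_filter.mpr ⟨ha, hva⟩
        have h1 : degA (predStep s a).arcs v = degA s.arcs v - 1 := by
          rw [herase, Finset.card_erase_of_mem hain]; rfl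
        have h2 : (predStep s a).pop v = s.pop v - 1 := by
          simp only [predStep]
          have : v = a.1 ∨ v = a.2 := by tauto
          rw [if_pos this]
        have h3 := hdeg v
        have h4 : 1 ≤ degA s.arcs v := Finset.card_pos.mpr ⟨a, hain⟩
        omega
      · have h1 : degA (predStep s a).arcs v ≤ degA s.arcs v := by
          rw [herase]; exact Finset.card_le_card (Finset.erase_subset _ _)
        have h2 : (predStep s a).pop v = s.pop v := by
          simp only [predStep]
          have : ¬ (v = a.1 ∨ v = a.2) := by tauto
          rw [if_neg this]
        rw [h2]; exact le_trans h1 (hdeg v)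
    have hc' : (predStep s a).arcs.card = N := by
      show (s.arcs.erase a).card = N
      rw [Finset.card_erase_of_mem ha]; omega
    obtain ⟨l, hvl, hempty, hlen⟩ := ih (predStep s a) hc' hdeg'
    exact ⟨a :: l, ⟨⟨ha, hp1, hp2⟩, hvl⟩, hempty, by simp [hlen]⟩

lemma grog_formula (n : ℕ) (A : Finset (ℕ × ℕ))
    (hA : ∀ a ∈ A, a.1 ≠ a.2 ∧ a.1 ∈ Finset.Icc 1 n ∧ a.2 ∈ Finset.Icc 1 n)
    (hdeg : ∀ v, degA A v ≤ v) :
    grogD n A + 2 * A.card = ∑ v ∈ Finset.Icc 1 n, v := by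
  classical
  have hinitA : (initState A).arcs = A := rfl
  obtain ⟨l, hvl, hempty, hlen⟩ := exists_full_strategy A.card (initState A) rfl
    (fun v => hdeg v)
  have hstrat : IsStrategy (initState A) l := by
    refine ⟨hvl, ?_⟩
    intro a ha
    rw [hempty] at ha
    exact absurd ha (Finset.notMem_empty a)
  have hresid0 : resid n (initState A) = ∑ v ∈ Finset.Icc 1 n, v := rfl
  have hres := resid_runSeq l (initState A) hvl hA
  rw [hlen, hresid0] at hres
  set S := {r | ∃ l, IsStrategy (initState A) l ∧ resid n (runSeq (initState A) l) = r}
    with hS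
  have hmem : resid n (runSeq (initState A) l) ∈ S := ⟨l, hstrat, rfl⟩
  have hlb : ∀ x ∈ S, resid n (runSeq (initState A) l) ≤ x := by
    rintro x ⟨l', hstrat', hx⟩
    have hres' := resid_runSeq l' (initState A) hstrat'.1 hA
    have hlen' := length_le_card l' (initState A) hstrat'.1
    rw [hinitA] at hlen'
    rw [hresid0] at hres'
    omega
  have : grogD n A = resid n (runSeq (initState A) l) := by
    apply le_antisymm (Nat.sInf_le hmem)
    have hne : S.Nonempty := ⟨_, hmem⟩
    exact le_csInf hne hlb
  rw [this]
  omega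

lemma jacoArcs_succ_card (n i : ℕ) (hi1 : 1 ≤ i) (hi2 : i ≤ n)
    (hJac : ∀ j : ℕ, jacoArc j (n + 1) ↔ (i + 1 ≤ j ∧ j ≤ n)) :
    (jacoArcs (n + 1)).card = (jacoArcs n).card + (n - i) := by
  classical
  set B := (Finset.Icc (i+1) n).image (fun j => (j, n+1)) with hB
  have hinj : Function.Injective (fun j : ℕ => (j, n+1)) := by
    intro a b h
    simpa using h
  have hBcard : B.card = n - i := by
    rw [hB, Finset.card_image_of_injective _ hinj, Nat.card_Icc]
    omega
  have hBmem : ∀ a : ℕ × ℕ, a ∈ B ↔ (i + 1 ≤ a.1 ∧ a.1 ≤ n ∧ a.2 = n + 1) := by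
    intro a
    rw [hB, Finset.mem_image]
    constructor
    · rintro ⟨j, hj, rfl⟩
      rw [Finset.mem_Icc] at hj
      exact ⟨hj.1, hj.2, rfl⟩
    · rintro ⟨h1, h2, h3⟩
      exact ⟨a.1, Finset.mem_Icc.mpr ⟨h1, h2⟩, by rw [← h3]⟩
  have hunion : jacoArcs (n+1) = jacoArcs n ∪ B := by
    ext a
    rw [Finset.mem_union, jacoArcs, jacoArcs, Finset.mem_filter, Finset.mem_filter,
      Finset.mem_product, Finset.mem_product, Finset.mem_Icc, Finset.mem_Icc,
      Finset.mem_Icc, Finset.mem_Icc, hBmem]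
    constructor
    · rintro ⟨⟨⟨h11, h12⟩, ⟨h21, h22⟩⟩, harc⟩
      have h3 := harc
      rw [jacoArc] at h3
      by_cases h : a.2 = n + 1
      · right
        have := (hJac a.1).mp (h ▸ harc)
        exact ⟨this.1, this.2, h⟩
      · left
        exact ⟨⟨⟨h11, by omega⟩, ⟨h21, by omega⟩⟩, harc⟩
    · rintro (⟨⟨⟨h11, h12⟩, ⟨h21, h22⟩⟩, harc⟩ | ⟨h1, h2, h3⟩)
      · exact ⟨⟨⟨h11, by omega⟩, ⟨h21, by omega⟩⟩, harc⟩
      · have harc : jacoArc a.1 a.2 := by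
          rw [h3]
          exact (hJac a.1).mpr ⟨h1, h2⟩
        exact ⟨⟨⟨by omega, by omega⟩, ⟨by omega, by omega⟩⟩, harc⟩
  have hdisj : Disjoint (jacoArcs n) B := by
    rw [Finset.disjoint_left]
    intro a ha hb
    have h1 := (jacoArcs_mem ha).2.2
    rw [Finset.mem_Icc] at h1
    have h2 := ((hBmem a).mp hb).2.2
    omega
  rw [hunion, Finset.card_union_of_disjoint hdisj, hBcard]

/-- Let `n ≥ 2` and let `v_i` be the Jaconian vertex of `J_n(1)`, so that
the in-neighbourhood of `v_{n+1}` in `J_{n+1}(1)` is exactly `{v_{i+1}, …, v_n}`. Then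
`g(J_{n+1}(1)) = g(J_n(1)) + (2i - n) + 1`. -/
theorem grog_number_of_Jaco_recursion (n i : ℕ) (hn : 2 ≤ n)
    (hi : i ∈ Finset.Icc 1 n)
    (hJac : ∀ j : ℕ, jacoArc j (n + 1) ↔ (i + 1 ≤ j ∧ j ≤ n)) :
    (grogJaco (n + 1) : ℤ) = (grogJaco n : ℤ) + (2 * (i : ℤ) - (n : ℤ)) + 1 := by
  rw [Finset.mem_Icc] at hi
  have g1 : grogD n (jacoArcs n) + 2 * (jacoArcs n).card = ∑ v ∈ Finset.Icc 1 n, v :=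
    grog_formula n (jacoArcs n) (fun a ha => jacoArcs_mem ha) (degA_jaco_le n)
  have g2 : grogD (n+1) (jacoArcs (n+1)) + 2 * (jacoArcs (n+1)).card
      = ∑ v ∈ Finset.Icc 1 (n+1), v :=
    grog_formula (n+1) (jacoArcs (n+1)) (fun a ha => jacoArcs_mem ha) (degA_jaco_le (n+1))
  have hcard := jacoArcs_succ_card n i hi.1 hi.2 hJac
  have hsum : ∑ v ∈ Finset.Icc 1 (n+1), v = (∑ v ∈ Finset.Icc 1 n, v) + (n+1) :=
    Finset.sum_Icc_succ_top (by omega) _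
  have e1 : grogJaco n = grogD n (jacoArcs n) := rfl
  have e2 : grogJaco (n+1) = grogD (n+1) (jacoArcs (n+1)) := rfl
  rw [e1, e2]
  omega
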